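/- Let S be a finite semigroup that is a left regular band of groups, with idempotent-power map ω. Then the set of idempotents of S is closed under multiplication and forms a left regular band: for all x, y ∈ S with x·x = x and y·y = y, one has (x·y)·(x·y) = x·y and x·y·x = x·y. -/
import Mathlib


/-- In a finite left regular band of groups, the set of idempotents is
closed under multiplication and forms a left regular band. -/
theorem lrbg_idempotents_form_LRB {S : Type*} [Semigroup S] [Fintype S] (ω : S → S)
    (hidem : ∀ s : S, ω s * ω s = ω s)
    (hpow : ∀ s : S, ∃ n : ℕ, ω s = (fun t => t * s)^[n] s)
    (lrbg1 : ∀ s : S, ω s * s = s)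
    (lrbg2 : ∀ s t : S, s * t * ω s = s * t) :
    ∀ x y : S, x * x = x → y * y = y →
      (x * y) * (x * y) = x * y ∧ x * y * x = x * y := by
  intro x y hx hy
  have hfix : ∀ n : ℕ, (fun t => t * x)^[n] x = x := by
    intro n
    induction n with
    | zero => rfl
    | succ k ih => rw [Function.iterate_succ_apply', ih, hx]
  have hωx : ω x = x := by
    obtain ⟨n, hn⟩ := hpow x
    rw [hn, hfix]
  have h2 : x * y * x = x * y := by
    have := lrbg2 x y; rwa [hωx] at this
  refine ⟨?_, h2⟩
  calc (x * y) * (x * y) = (x * y * x) * y := (mul_assoc (x*y) x y).symm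
    _ = x * y * y := by rw [h2]
    _ = x * (y * y) := by rw [mul_assoc]
    _ = x * y := by rw [hy]
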